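/- Let Γ ⊂ P^m be a reduced zero-dimensional complete intersection with s = (Σ d_i) − m − 1. The evaluation code C(Γ)_a is MDS if and only if h^1(𝓘_{Γ''}(s−a)) = 0 for every subset Γ'' ⊆ Γ with |Γ''| = h^1(𝓘_Γ(a)). -/

import Mathlib

open MvPolynomial

/-- Evaluation of homogeneous degree-`a` polynomials at fixed representatives of
`n` points of `ℙ^m`. -/
noncomputable def evalMap (K : Type) [Field K] (m n a : ℕ)
    (p : Fin n → Fin (m+1) → K) :
    homogeneousSubmodule (Fin (m+1)) K a →ₗ[K] (Fin n → K) where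
  toFun f i := eval (p i) (f : MvPolynomial (Fin (m+1)) K)
  map_add' f g := by ext i; simp
  map_smul' c f := by ext i; simp [smul_eval]

/-- `h^0(𝓘_{Γ'}(a))` for the subset of `Γ` indexed by `S`. -/
noncomputable def h0 (K : Type) [Field K] (m n a : ℕ) (p : Fin n → Fin (m+1) → K)
    (S : Finset (Fin n)) : ℕ :=
  Module.finrank K (LinearMap.ker
    ((LinearMap.funLeft K K (Subtype.val : {i // i ∈ S} → Fin n)).comp (evalMap K m n a p)))

/-- `h^1(𝓘_{Γ''}(a))` for the subset of `Γ` indexed by `S`: the corank of the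
degree-`a` evaluation map at those points. -/
noncomputable def h1 (K : Type) [Field K] (m n a : ℕ) (p : Fin n → Fin (m+1) → K)
    (S : Finset (Fin n)) : ℕ :=
  S.card - Module.finrank K (LinearMap.range
    ((LinearMap.funLeft K K (Subtype.val : {i // i ∈ S} → Fin n)).comp (evalMap K m n a p)))

open Module LinearMap

section Aux

variable (K : Type) [Field K] (m n : ℕ) (p : Fin n → Fin (m+1) → K)

instance fdHom (σ : Type*) [Finite σ] (b : ℕ) :
    FiniteDimensional K (homogeneousSubmodule σ K b) := by
  apply Submodule.finiteDimensional_of_le (S₂ := restrictTotalDegree σ K b)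
  intro f hf
  rw [mem_restrictTotalDegree]
  exact MvPolynomial.IsHomogeneous.totalDegree_le hf

lemma deg0_eq_C {σ : Type*} {f : MvPolynomial σ K} (hf : f ∈ homogeneousSubmodule σ K 0) :
    f = C (coeff 0 f) := by
  have h : f.totalDegree = 0 :=
    le_antisymm (MvPolynomial.IsHomogeneous.totalDegree_le hf) (Nat.zero_le _)
  ext d
  rcases eq_or_ne d 0 with rfl | hd
  · simp
  · classical
    rw [coeff_C, if_neg (Ne.symm hd)]
    by_contra hc
    exact hd (Finsupp.ext fun x => ((totalDegree_eq_zero_iff σ f).mp h d (by simpa using hc) x))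

lemma finrank_V0 (σ : Type*) [Finite σ] : Module.finrank K (homogeneousSubmodule σ K 0) = 1 := by
  have e : homogeneousSubmodule σ K 0 ≃ₗ[K] K :=
    { toFun := fun f => coeff 0 f.val
      map_add' := by intros; simp
      map_smul' := by intros; simp
      invFun := fun c => ⟨C c, isHomogeneous_C σ c⟩
      left_inv := fun f => Subtype.ext (deg0_eq_C K f.2).symm
      right_inv := fun c => by simp }
  rw [e.finrank_eq, Module.finrank_self]

/-- restricted evaluation map -/
noncomputable abbrev evS (b : ℕ) (S : Finset (Fin n)) :
    homogeneousSubmodule (Fin (m+1)) K b →ₗ[K] ({i // i ∈ S} → K) :=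
  (LinearMap.funLeft K K (Subtype.val : {i // i ∈ S} → Fin n)).comp (evalMap K m n b p)

lemma h0_def (b : ℕ) (S : Finset (Fin n)) :
    h0 K m n b p S = finrank K (LinearMap.ker (evS K m n p b S)) := rfl

lemma h1_def (b : ℕ) (S : Finset (Fin n)) :
    h1 K m n b p S = S.card - finrank K (LinearMap.range (evS K m n p b S)) := rfl

lemma rank_nullity (b : ℕ) (S : Finset (Fin n)) :
    finrank K (LinearMap.range (evS K m n p b S)) + h0 K m n b p S
      = finrank K (homogeneousSubmodule (Fin (m+1)) K b) :=
  LinearMap.finrank_range_add_finrank_ker _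

lemma rankS_le (b : ℕ) (S : Finset (Fin n)) :
    finrank K (LinearMap.range (evS K m n p b S)) ≤ S.card := by
  have := Submodule.finrank_le (LinearMap.range (evS K m n p b S))
  rwa [Module.finrank_fintype_fun_eq_card, Fintype.card_coe] at this

lemma rank_univ (b : ℕ) :
    finrank K (LinearMap.range (evS K m n p b Finset.univ))
      = finrank K (LinearMap.range (evalMap K m n b p)) := by
  rw [LinearMap.range_comp]
  have hinj : Function.Injective
      (LinearMap.funLeft K K (Subtype.val : {i // i ∈ (Finset.univ : Finset (Fin n))} → Fin n)) :=
    LinearMap.funLeft_injective_of_surjective K K _ (fun i => ⟨⟨i, Finset.mem_univ i⟩, rfl⟩)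
  exact ((LinearMap.range (evalMap K m n b p)).equivMapOfInjective _ hinj).finrank_eq.symm

lemma h1_univ (b : ℕ) :
    h1 K m n b p Finset.univ = n - finrank K (LinearMap.range (evalMap K m n b p)) := by
  rw [h1_def, rank_univ, Finset.card_univ, Fintype.card_fin]

lemma rank_main_le (b : ℕ) :
    finrank K (LinearMap.range (evalMap K m n b p)) ≤ n := by
  have := rankS_le K m n p b Finset.univ
  rw [rank_univ, Finset.card_univ, Fintype.card_fin] at this
  exact this

/-- key: rank of restriction equals rank of full evaluation iff no nonzero codeword vanishes
on `T`. -/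
lemma rank_evS_eq_iff (b : ℕ) (T : Finset (Fin n)) :
    finrank K (LinearMap.range (evS K m n p b T))
        = finrank K (LinearMap.range (evalMap K m n b p)) ↔
      (∀ w ∈ LinearMap.range (evalMap K m n b p), (∀ i ∈ T, w i = 0) → w = 0) := by
  set R := LinearMap.range (evalMap K m n b p)
  set π := LinearMap.funLeft K K (Subtype.val : {i // i ∈ T} → Fin n)
  set g := π.comp R.subtype
  have hrange : LinearMap.range g = LinearMap.range (evS K m n p b T) := by
    rw [LinearMap.range_comp, LinearMap.range_comp, Submodule.range_subtype]
  have hRN : finrank K (LinearMap.range g) + finrank K (LinearMap.ker g) = finrank K R :=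
    LinearMap.finrank_range_add_finrank_ker g
  have hker : LinearMap.ker g = ⊥ ↔
      (∀ w ∈ R, (∀ i ∈ T, w i = 0) → w = 0) := by
    rw [LinearMap.ker_eq_bot']
    constructor
    · intro h w hw hvan
      have : g ⟨w, hw⟩ = 0 := by
        funext i
        exact hvan i.val i.2
      have := h ⟨w, hw⟩ this
      simpa [Subtype.ext_iff] using this
    · intro h x hx
      apply Subtype.ext
      refine h x.val x.2 fun i hi => ?_
      exact congrFun hx ⟨i, hi⟩
  constructor
  · intro h
    have hr : finrank K (LinearMap.range g) = finrank K R := by rw [hrange, h]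
    have h0 : finrank K (LinearMap.ker g) = 0 := by omega
    exact hker.mp (Submodule.finrank_eq_zero.mp h0)
  · intro h
    have hk : LinearMap.ker g = ⊥ := hker.mpr h
    rw [hk] at hRN
    rw [← hrange]
    simpa using hRN

lemma h1_zero_iff (b : ℕ) (T : Finset (Fin n))
    (hT : T.card = finrank K (LinearMap.range (evalMap K m n b p))) :
    h1 K m n b p T = 0 ↔
      finrank K (LinearMap.range (evS K m n p b T))
        = finrank K (LinearMap.range (evalMap K m n b p)) := by
  have hle := rankS_le K m n p b T
  rw [h1_def]
  omega

lemma MDS_iff [DecidableEq K] (b : ℕ) :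
    (∀ w ∈ LinearMap.range (evalMap K m n b p), w ≠ 0 →
        n - finrank K (LinearMap.range (evalMap K m n b p)) + 1 ≤ hammingNorm w) ↔
      (∀ T : Finset (Fin n), T.card = finrank K (LinearMap.range (evalMap K m n b p)) →
        h1 K m n b p T = 0) := by
  set r := finrank K (LinearMap.range (evalMap K m n b p)) with hr
  have hrn : r ≤ n := rank_main_le K m n p b
  have hham : ∀ w : Fin n → K,
      hammingNorm w + (Finset.univ.filter (fun i => w i = 0)).card = n := by
    intro w
    have := Finset.card_filter_add_card_filter_not
      (s := (Finset.univ : Finset (Fin n))) (p := fun i => w i ≠ 0)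
    simp only [hammingNorm, Finset.card_univ, Fintype.card_fin, not_not] at this ⊢
    convert this using 3
  constructor
  · intro hMDS T hT
    rw [h1_zero_iff K m n p b T hT, rank_evS_eq_iff]
    intro w hw hvan
    by_contra hw0
    have h1 := hMDS w hw hw0
    have h2 : T ⊆ Finset.univ.filter (fun i => w i = 0) := by
      intro i hi
      simp [hvan i hi]
    have := Finset.card_le_card h2
    have := hham w
    omega
  · intro hT w hw hw0
    by_contra hlt
    push_neg at hlt
    have hz : r ≤ (Finset.univ.filter (fun i => w i = 0)).card := by
      have := hham w
      omega
    obtain ⟨T, hTsub, hTcard⟩ := Finset.exists_subset_card_eq hz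
    have := (h1_zero_iff K m n p b T hTcard).mp (hT T hTcard)
    rw [rank_evS_eq_iff] at this
    refine hw0 (this w hw fun i hi => ?_)
    have := hTsub hi
    simpa using (Finset.mem_filter.mp this).2

lemma duality (b c : ℕ) (T : Finset (Fin n))
    (hT : T.card = finrank K (LinearMap.range (evalMap K m n b p)))
    (hCBT : h0 K m n b p T = h0 K m n b p Finset.univ + h1 K m n c p Tᶜ) :
    h1 K m n b p T = h1 K m n c p Tᶜ := by
  have e1 := rank_nullity K m n p b T
  have e2 := rank_nullity K m n p b Finset.univ
  have e3 := rank_univ K m n p b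
  have e4 := rankS_le K m n p b T
  rw [h1_def]
  omega

lemma evalMap_apply (b : ℕ) (f : homogeneousSubmodule (Fin (m+1)) K b) (i : Fin n) :
    evalMap K m n b p f i = eval (p i) (f : MvPolynomial (Fin (m+1)) K) := rfl

lemma evS_apply (b : ℕ) (S : Finset (Fin n)) (f : homogeneousSubmodule (Fin (m+1)) K b)
    (i : {i // i ∈ S}) :
    evS K m n p b S f i = eval (p i.val) (f : MvPolynomial (Fin (m+1)) K) := rfl

lemma h0_zero_empty : h0 K m n 0 p ∅ = 1 := by
  haveI : IsEmpty {i // i ∈ (∅ : Finset (Fin n))} := ⟨fun x => Finset.notMem_empty _ x.2⟩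
  have hz : evS K m n p 0 ∅ = 0 := by
    apply LinearMap.ext
    intro f
    exact Subsingleton.elim _ _
  rw [h0_def, hz]
  rw [LinearMap.ker_zero, finrank_top, finrank_V0]

lemma h0_zero_univ (hn1 : 1 ≤ n) : h0 K m n 0 p Finset.univ = 0 := by
  rw [h0_def]
  have : LinearMap.ker (evS K m n p 0 Finset.univ) = ⊥ := by
    rw [LinearMap.ker_eq_bot']
    intro f hf
    have hC := deg0_eq_C K f.2
    have := congrFun hf ⟨⟨0, hn1⟩, Finset.mem_univ _⟩
    rw [evS_apply, hC] at this
    simp only [eval_C, Pi.zero_apply] at this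
    apply Subtype.ext
    rw [hC, this, map_zero]
    rfl
  rw [this, finrank_bot]

lemma rank_s_univ (s : ℕ) (hn1 : 1 ≤ n)
    (hCB0 : h0 K m n 0 p ∅ = h0 K m n 0 p Finset.univ + h1 K m n s p ∅ᶜ) :
    finrank K (LinearMap.range (evS K m n p s Finset.univ)) = n - 1 := by
  rw [h0_zero_empty, h0_zero_univ K m n p hn1, Finset.compl_empty] at hCB0
  have h1u := h1_def K m n p s Finset.univ
  have hle := rankS_le K m n p s Finset.univ
  rw [Finset.card_univ, Fintype.card_fin] at h1u hle
  omega

lemma h1_zero_single (j : Fin n) : h1 K m n 0 p {j} = 0 := by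
  have hmem : (1 : MvPolynomial (Fin (m+1)) K) ∈ homogeneousSubmodule (Fin (m+1)) K 0 :=
    (mem_homogeneousSubmodule _ _).mpr (isHomogeneous_one _ _)
  set w := evS K m n p 0 {j} ⟨1, hmem⟩ with hw
  have hwval : w = fun _ => 1 := by
    funext i
    rw [hw, evS_apply]
    simp
  have hwne : w ≠ 0 := by
    intro h
    have := congrFun h ⟨j, Finset.mem_singleton_self j⟩
    rw [hwval] at this
    simpa using this
  have hge : finrank K (LinearMap.range (evS K m n p 0 {j})) ≠ 0 := by
    intro h
    have hbot := Submodule.finrank_eq_zero.mp h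
    have : w ∈ LinearMap.range (evS K m n p 0 {j}) := ⟨⟨1, hmem⟩, rfl⟩
    rw [hbot] at this
    exact hwne (Submodule.mem_bot K |>.mp this)
  have hle := rankS_le K m n p 0 {j}
  rw [Finset.card_singleton] at hle
  rw [h1_def, Finset.card_singleton]
  omega

lemma range_compl_single_top (s : ℕ) (hn1 : 1 ≤ n) (j : Fin n)
    (hCB0 : h0 K m n 0 p ∅ = h0 K m n 0 p Finset.univ + h1 K m n s p ∅ᶜ)
    (hCBj : h0 K m n s p {j}ᶜ = h0 K m n s p Finset.univ + h1 K m n 0 p {j}ᶜᶜ) :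
    LinearMap.range (evS K m n p s {j}ᶜ) = ⊤ := by
  rw [compl_compl, h1_zero_single, add_zero] at hCBj
  have e1 := rank_nullity K m n p s {j}ᶜ
  have e2 := rank_nullity K m n p s Finset.univ
  have e3 := rank_s_univ K m n p s hn1 hCB0
  have hr : finrank K (LinearMap.range (evS K m n p s {j}ᶜ)) = n - 1 := by omega
  apply Submodule.eq_top_of_finrank_eq
  rw [hr, Module.finrank_fintype_fun_eq_card, Fintype.card_coe, Finset.card_compl,
    Finset.card_singleton, Fintype.card_fin]

/-- Any functional annihilating the degree-`s` code which vanishes at one coordinate is zero. -/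
lemma lemA (s : ℕ) (hn1 : 1 ≤ n)
    (hCB0 : h0 K m n 0 p ∅ = h0 K m n 0 p Finset.univ + h1 K m n s p ∅ᶜ)
    (hCBj : ∀ j : Fin n, h0 K m n s p {j}ᶜ
      = h0 K m n s p Finset.univ + h1 K m n 0 p {j}ᶜᶜ)
    (l : Fin n → K)
    (hl : ∀ w ∈ LinearMap.range (evalMap K m n s p), ∑ i, l i * w i = 0)
    (j : Fin n) (hlj : l j = 0) : l = 0 := by
  classical
  funext j'
  rcases eq_or_ne j' j with rfl | hne
  · exact hlj
  · have hsurj := LinearMap.range_eq_top.mp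
      (range_compl_single_top K m n p s hn1 j hCB0 (hCBj j))
    obtain ⟨f, hf⟩ := hsurj (fun i => if i.val = j' then 1 else 0)
    have hw : evalMap K m n s p f ∈ LinearMap.range (evalMap K m n s p) := ⟨f, rfl⟩
    have hsum := hl _ hw
    have hcoord : ∀ i : Fin n, i ≠ j →
        evalMap K m n s p f i = if i = j' then 1 else 0 := by
      intro i hi
      have hmem : i ∈ ({j}ᶜ : Finset (Fin n)) := by
        simp [Finset.mem_compl, hi]
      have := congrFun hf ⟨i, hmem⟩
      rw [evS_apply] at this
      simp only at this
      rw [evalMap_apply]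
      rw [this]
    have heq : ∑ i, l i * evalMap K m n s p f i = l j' * evalMap K m n s p f j' :=
      Finset.sum_eq_single j'
        (fun i _ hi => by
          rcases eq_or_ne i j with rfl | hij
          · rw [hlj, zero_mul]
          · rw [hcoord i hij, if_neg hi, mul_zero])
        (by simp)
    rw [heq, hcoord j' hne, if_pos rfl, mul_one] at hsum
    exact hsum

set_option maxHeartbeats 2000000 in
lemma rank_eq_n (s a : ℕ) (hsa : s < a) (hn2 : 2 ≤ n)
    (hp0 : ∀ i, p i ≠ 0)
    (hdist : ∀ i j : Fin n, i ≠ j → ∀ c : K, p i ≠ c • p j)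
    (hCB0 : h0 K m n 0 p ∅ = h0 K m n 0 p Finset.univ + h1 K m n s p ∅ᶜ)
    (hCBj : ∀ j : Fin n, h0 K m n s p {j}ᶜ
      = h0 K m n s p Finset.univ + h1 K m n 0 p {j}ᶜᶜ) :
    finrank K (LinearMap.range (evalMap K m n a p)) = n := by
  classical
  have hn1 : 1 ≤ n := by omega
  by_contra hne
  have hle := rank_main_le K m n p a
  have hlt : LinearMap.range (evalMap K m n a p) < ⊤ := by
    rw [lt_top_iff_ne_top]
    intro htop
    rw [htop, finrank_top, Module.finrank_fintype_fun_eq_card, Fintype.card_fin] at hne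
    exact hne rfl
  obtain ⟨φ, hφne, hφ⟩ := Submodule.exists_dual_map_eq_bot_of_lt_top hlt inferInstance
  set l : Fin n → K := fun j => φ (fun i => if j = i then 1 else 0) with hl
  have hφsum : ∀ w : Fin n → K, φ w = ∑ i, w i * l i := by
    intro w
    rw [LinearMap.pi_apply_eq_sum_univ]
    exact Finset.sum_congr rfl fun i _ => by rw [smul_eq_mul, hl]
  have hann_a : ∀ w ∈ LinearMap.range (evalMap K m n a p), ∑ i, l i * w i = 0 := by
    intro w hw
    have hmem : φ w ∈ (LinearMap.range (evalMap K m n a p)).map φ :=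
      Submodule.mem_map_of_mem hw
    rw [hφ, Submodule.mem_bot] at hmem
    rw [← hmem, hφsum]
    exact Finset.sum_congr rfl fun i _ => mul_comm _ _
  have hlne : l ≠ 0 := by
    intro hl0
    apply hφne
    apply LinearMap.ext
    intro w
    rw [hφsum, hl0]
    simp
  set e := a - s with hedef
  have he1 : e ≠ 0 := by omega
  have hmul : ∀ (q : MvPolynomial (Fin (m+1)) K), q.IsHomogeneous e →
      ∀ w ∈ LinearMap.range (evalMap K m n s p),
        ∑ i, (l i * eval (p i) q) * w i = 0 := by
    rintro q hq w ⟨g, rfl⟩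
    have hmem : q * g.val ∈ homogeneousSubmodule (Fin (m+1)) K a := by
      rw [mem_homogeneousSubmodule]
      have := hq.mul ((mem_homogeneousSubmodule _ _).mp g.2)
      rwa [show e + s = a by omega] at this
    have h := hann_a (evalMap K m n a p ⟨q * g.val, hmem⟩) ⟨_, rfl⟩
    rw [← h]
    refine Finset.sum_congr rfl fun i _ => ?_
    rw [evalMap_apply, evalMap_apply]
    show l i * eval (p i) q * eval (p i) g.val = l i * eval (p i) (q * g.val)
    rw [eval_mul]
    ring
  by_cases hall : ∀ (q : MvPolynomial (Fin (m+1)) K), q.IsHomogeneous e →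
      ∀ i, l i * eval (p i) q = 0
  · obtain ⟨j, hlj⟩ := Function.ne_iff.mp hlne
    obtain ⟨k, hpk⟩ := Function.ne_iff.mp (hp0 j)
    have h := hall (X k ^ e) (isHomogeneous_X_pow k e) j
    rw [map_pow, eval_X] at h
    exact mul_ne_zero hlj (pow_ne_zero e (by simpa using hpk)) h
  · push_neg at hall
    obtain ⟨q0, hq0, i0, hi0⟩ := hall
    set μ : Fin n → K := fun i => l i * eval (p i) q0 with hμ
    have hμann := hmul q0 hq0
    have hμall : ∀ i, μ i ≠ 0 := by
      intro i hzi
      have h0' := lemA K m n p s hn1 hCB0 hCBj μ hμann i hzi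
      exact hi0 (congrFun h0' i0)
    have hlall : ∀ i, l i ≠ 0 := by
      intro i hi
      exact hμall i (by rw [hμ]; simp [hi])
    set j1 : Fin n := ⟨0, by omega⟩ with hj1
    set j2 : Fin n := ⟨1, by omega⟩ with hj2
    have hj : j2 ≠ j1 := by
      intro h
      rw [hj1, hj2, Fin.mk.injEq] at h
      exact one_ne_zero h
    have key : ∀ (q : MvPolynomial (Fin (m+1)) K), q.IsHomogeneous e →
        μ j1 * (l j2 * eval (p j2) q) = (l j1 * eval (p j1) q) * μ j2 := by
      intro q hq
      set l' : Fin n → K :=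
        fun i => μ j1 * (l i * eval (p i) q) - (l j1 * eval (p j1) q) * μ i with hl'
      have hann' : ∀ w ∈ LinearMap.range (evalMap K m n s p), ∑ i, l' i * w i = 0 := by
        intro w hw
        have ha1 := hmul q hq w hw
        have ha2 := hμann w hw
        have : ∑ i, l' i * w i
            = μ j1 * (∑ i, (l i * eval (p i) q) * w i)
              - (l j1 * eval (p j1) q) * (∑ i, μ i * w i) := by
          rw [Finset.mul_sum, Finset.mul_sum, ← Finset.sum_sub_distrib]
          exact Finset.sum_congr rfl fun i _ => by rw [hl']; ring
        rw [this, ha1, ha2]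
        ring
      have hl'j1 : l' j1 = 0 := by rw [hl']; ring
      have h0' := lemA K m n p s hn1 hCB0 hCBj l' hann' j1 hl'j1
      have := congrFun h0' j2
      rw [hl'] at this
      simpa [sub_eq_zero] using this
    obtain ⟨k, hpk⟩ := Function.ne_iff.mp (hp0 j1)
    have hpk1 : p j1 k ≠ 0 := by simpa using hpk
    have hkey1 := key (X k ^ e) (isHomogeneous_X_pow k e)
    rw [map_pow, eval_X, map_pow, eval_X] at hkey1
    have hpk2 : p j2 k ≠ 0 := by
      intro hz
      rw [hz, zero_pow he1, mul_zero, mul_zero] at hkey1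
      exact mul_ne_zero (mul_ne_zero (hlall j1) (pow_ne_zero e hpk1)) (hμall j2) hkey1.symm
    set A := μ j1 * (l j2 * (p j2 k) ^ (e-1)) with hA
    set B := (l j1 * (p j1 k) ^ (e-1)) * μ j2 with hB
    have hAne : A ≠ 0 :=
      mul_ne_zero (hμall j1) (mul_ne_zero (hlall j2) (pow_ne_zero _ hpk2))
    have hBne : B ≠ 0 :=
      mul_ne_zero (mul_ne_zero (hlall j1) (pow_ne_zero _ hpk1)) (hμall j2)
    have hAB : ∀ t, A * p j2 t = B * p j1 t := by
      intro t
      have hhom : (X k ^ (e-1) * X t : MvPolynomial (Fin (m+1)) K).IsHomogeneous e := by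
        have := (isHomogeneous_X_pow (R := K) k (e-1)).mul (isHomogeneous_X K t)
        rwa [show (e-1) + 1 = e by omega] at this
      have h := key _ hhom
      rw [eval_mul, map_pow, eval_X, eval_X, eval_mul, map_pow, eval_X, eval_X] at h
      rw [hA, hB]
      calc μ j1 * (l j2 * p j2 k ^ (e - 1)) * p j2 t
          = μ j1 * (l j2 * (p j2 k ^ (e - 1) * p j2 t)) := by ring
        _ = l j1 * (p j1 k ^ (e - 1) * p j1 t) * μ j2 := h
        _ = l j1 * p j1 k ^ (e - 1) * μ j2 * p j1 t := by ring
    apply hdist j2 j1 hj (B / A)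
    funext t
    rw [Pi.smul_apply, smul_eq_mul, div_mul_eq_mul_div, eq_div_iff hAne, mul_comm (p j2 t) A]
    exact hAB t

end Aux

/-- MDS criterion for complete intersection codes: `C(Γ)_a` (a code of length
`n = |Γ|` and dimension `k = n - h¹(𝓘_Γ(a))`) is MDS — i.e. every nonzero codeword
has weight at least `n - k + 1` — iff `h¹(𝓘_{Γ''}(s-a)) = 0` for every subset
`Γ'' ⊆ Γ` with `|Γ''| = h¹(𝓘_Γ(a))`.  (Cayley–Bacharach is hypothesis `hCB`.) -/
theorem stmt_8 (K : Type) [Field K] [DecidableEq K]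
    (m n s a : ℕ) (d : Fin m → ℕ)
    (hn : n = ∏ i, d i) (hs : s + m + 1 = ∑ i, d i)
    (p : Fin n → Fin (m+1) → K)
    (hp0 : ∀ i, p i ≠ 0)
    (hdist : ∀ i j : Fin n, i ≠ j → ∀ c : K, p i ≠ c • p j)
    (F : Fin m → MvPolynomial (Fin (m+1)) K)
    (hF : ∀ i, (F i).IsHomogeneous (d i))
    (hlocus : ∀ v : Fin (m+1) → K, v ≠ 0 →
      ((∀ i, eval v (F i) = 0) ↔ ∃ (j : Fin n) (c : K), c ≠ 0 ∧ v = c • p j))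
    (hCB : ∀ (S : Finset (Fin n)) (b : ℕ), b ≤ s →
      h0 K m n b p S = h0 K m n b p Finset.univ + h1 K m n (s - b) p Sᶜ) :
    (∀ w ∈ LinearMap.range (evalMap K m n a p), w ≠ 0 →
        n - Module.finrank K (LinearMap.range (evalMap K m n a p)) + 1 ≤ hammingNorm w) ↔
      (∀ S : Finset (Fin n), S.card = h1 K m n a p Finset.univ →
        h1 K m n (s - a) p S = 0) := by
  set r := finrank K (LinearMap.range (evalMap K m n a p)) with hrdef
  have hrn : r ≤ n := rank_main_le K m n p a
  have hh1u : h1 K m n a p Finset.univ = n - r := h1_univ K m n p a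
  by_cases ha : a ≤ s
  · -- main case
    rw [MDS_iff K m n p a]
    constructor
    · intro hT S hS
      rw [hh1u] at hS
      have hTc : Sᶜ.card = r := by
        rw [Finset.card_compl, Fintype.card_fin]
        omega
      have := duality K m n p a (s - a) Sᶜ hTc (hCB Sᶜ a ha)
      rw [compl_compl] at this
      rw [← this]
      exact hT Sᶜ hTc
    · intro hS T hT
      have := duality K m n p a (s - a) T hT (hCB T a ha)
      rw [this]
      apply hS
      rw [hh1u, Finset.card_compl, Fintype.card_fin, hT]
  · -- case a > s : evaluation is surjective
    have hr : r = n := by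
      rcases Nat.eq_zero_or_pos n with hn0 | hn1
      · omega
      · have hn2 : 2 ≤ n := by
          rcases eq_or_lt_of_le (show 1 ≤ n from hn1) with h1 | h2
          · exfalso
            have hprod : ∏ i, d i = 1 := by rw [← hn, ← h1]
            have hd : ∀ i, d i = 1 := fun i =>
              Nat.dvd_one.mp (hprod ▸ Finset.dvd_prod_of_mem d (Finset.mem_univ i))
            have hsum : ∑ i, d i = m := by
              rw [Finset.sum_congr rfl (fun i _ => hd i), Finset.sum_const, smul_eq_mul,
                mul_one, Finset.card_univ, Fintype.card_fin]
            omega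
          · omega
        have hCB0 := hCB ∅ 0 (Nat.zero_le s)
        rw [Nat.sub_zero] at hCB0
        have hCBj : ∀ j : Fin n, h0 K m n s p {j}ᶜ
            = h0 K m n s p Finset.univ + h1 K m n 0 p {j}ᶜᶜ := by
          intro j
          have := hCB ({j}ᶜ) s le_rfl
          rwa [Nat.sub_self] at this
        exact rank_eq_n K m n p s a (by omega) hn2 hp0 hdist hCB0 hCBj
    constructor
    · intro _ S hS
      rw [hh1u, hr, Nat.sub_self] at hS
      have := Nat.sub_le S.card (finrank K (LinearMap.range (evS K m n p (s - a) S)))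
      rw [← h1_def] at this
      omega
    · intro _ w hw hw0
      have := hammingNorm_pos_iff.mpr hw0
      simp only [hr, Nat.sub_self]
      omega
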